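/- Let U, G, E be independent random variables with U uniformly distributed on [0,1], G distributed according to Gamma(2,1) and E distributed according to Exp(1). Then the product U·G has the Exp(1) distribution, and the sum U·G + E has the Gamma(2,1) distribution. -/

import Mathlib

open MeasureTheory ProbabilityTheory

/- docstring below -/
section Aux
open Real Set

lemma hasDeriv1 (y : ℝ) : HasDerivAt (fun s : ℝ => -Real.exp (-s)) (Real.exp (-y)) y := by
  have h : HasDerivAt (fun s : ℝ => Real.exp (-s)) (-Real.exp (-y)) y := by
    have := (hasDerivAt_neg y).exp; convert this using 1; ring
  exact h.neg.congr_deriv (neg_neg _)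

lemma hasDeriv2 (y : ℝ) : HasDerivAt (fun s : ℝ => -(1+s) * Real.exp (-s)) (y * Real.exp (-y)) y := by
  have h1 : HasDerivAt (fun s : ℝ => -(1+s)) (-1 : ℝ) y := by
    exact ((hasDerivAt_id y).const_add 1).neg
  have h2 : HasDerivAt (fun s : ℝ => Real.exp (-s)) (-Real.exp (-y)) y := by
    have := (hasDerivAt_neg y).exp; convert this using 1; ring
  have := h1.mul h2
  exact this.congr_deriv (by ring)

lemma intExp (a b : ℝ) : ∫ s in a..b, Real.exp (-s) = Real.exp (-a) - Real.exp (-b) := by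
  have := intervalIntegral.integral_eq_sub_of_hasDerivAt (f := fun s : ℝ => -Real.exp (-s))
    (f' := fun s => Real.exp (-s)) (a := a) (b := b) (fun x _ => hasDeriv1 x) ?_
  · rw [this]; ring
  · apply Continuous.intervalIntegrable; continuity

lemma intMulExp (a b : ℝ) : ∫ s in a..b, s * Real.exp (-s)
    = (-(1+b) * Real.exp (-b)) - (-(1+a) * Real.exp (-a)) := by
  refine intervalIntegral.integral_eq_sub_of_hasDerivAt (fun x _ => hasDeriv2 x) ?_
  apply Continuous.intervalIntegrable; continuity

lemma gammaPDF11 {s : ℝ} (hs : 0 ≤ s) : gammaPDF 1 1 s = ENNReal.ofReal (Real.exp (-s)) := by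
  rw [gammaPDF_of_nonneg hs]
  norm_num [Real.Gamma_one, Real.rpow_natCast]

lemma gammaPDF21 {s : ℝ} (hs : 0 ≤ s) : gammaPDF 2 1 s = ENNReal.ofReal (s * Real.exp (-s)) := by
  rw [gammaPDF_of_nonneg hs]
  norm_num [Real.Gamma_two]

lemma gammaPDF_zero_of_nonpos {a r s : ℝ} (ha : 1 < a) (hs : s ≤ 0) : gammaPDF a r s = 0 := by
  rcases lt_or_eq_of_le hs with h | h
  · exact gammaPDF_of_neg h
  · subst h
    rw [gammaPDF_of_nonneg le_rfl, Real.zero_rpow (by linarith)]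
    simp

lemma exp_cdf (c : ℝ) : expMeasure 1 (Iic c) = ENNReal.ofReal (1 - Real.exp (-c)) := by
  rw [expMeasure, gammaMeasure, withDensity_apply _ measurableSet_Iic]
  rcases lt_or_ge c 0 with hc | hc
  · rw [setLIntegral_congr_fun measurableSet_Iic
      ((fun y (hy : y ≤ c) => gammaPDF_of_neg (lt_of_le_of_lt hy hc)))]
    rw [lintegral_zero]
    symm
    rw [ENNReal.ofReal_eq_zero]
    have : 1 < Real.exp (-c) := by
      rw [show (1:ℝ) = Real.exp 0 by simp]
      exact Real.exp_lt_exp.2 (by linarith)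
    linarith
  · rw [lintegral_Iic_eq_lintegral_Iio_add_Icc _ hc]
    rw [setLIntegral_congr_fun measurableSet_Iio
      ((fun y (hy : y < 0) => gammaPDF_of_neg hy)), lintegral_zero, zero_add]
    rw [setLIntegral_congr_fun measurableSet_Icc
      ((fun y hy => gammaPDF11 hy.1))]
    rw [← ofReal_integral_eq_lintegral_ofReal]
    · congr 1
      have : ∫ y in Icc 0 c, Real.exp (-y) = ∫ y in (0:ℝ)..c, Real.exp (-y) := by
        rw [intervalIntegral.integral_of_le hc, integral_Icc_eq_integral_Ioc]
      rw [this, intExp]; simp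
    · exact (Continuous.integrableOn_Icc (by continuity))
    · exact ae_of_all _ fun y => (Real.exp_pos _).le

lemma gamma2_cdf {c : ℝ} (hc : 0 ≤ c) :
    gammaMeasure 2 1 (Iic c) = ENNReal.ofReal (1 - (1+c) * Real.exp (-c)) := by
  rw [gammaMeasure, withDensity_apply _ measurableSet_Iic]
  rw [lintegral_Iic_eq_lintegral_Iio_add_Icc _ hc]
  rw [setLIntegral_congr_fun measurableSet_Iio
    ((fun y (hy : y < 0) => gammaPDF_of_neg hy)), lintegral_zero, zero_add]
  rw [setLIntegral_congr_fun measurableSet_Icc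
    ((fun y hy => gammaPDF21 hy.1))]
  rw [← ofReal_integral_eq_lintegral_ofReal]
  · congr 1
    have : ∫ y in Icc 0 c, y * Real.exp (-y) = ∫ y in (0:ℝ)..c, y * Real.exp (-y) := by
      rw [intervalIntegral.integral_of_le hc, integral_Icc_eq_integral_Ioc]
    rw [this, intMulExp]; simp; ring
  · exact (Continuous.integrableOn_Icc (by continuity))
  · refine (ae_restrict_iff' measurableSet_Icc).2 (ae_of_all _ fun y hy => ?_)
    have h1 := hy.1
    simp only [Pi.zero_apply]
    positivity

lemma gamma2_cdf_neg {c : ℝ} (hc : c < 0) : gammaMeasure 2 1 (Iic c) = 0 := by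
  rw [gammaMeasure, withDensity_apply _ measurableSet_Iic]
  rw [setLIntegral_congr_fun measurableSet_Iic
    ((fun y (hy : y ≤ c) => gammaPDF_of_neg (lt_of_le_of_lt hy hc)))]
  exact lintegral_zero
lemma unif_prob : IsProbabilityMeasure (volume.restrict (Icc (0:ℝ) 1)) := by
  constructor
  rw [Measure.restrict_apply MeasurableSet.univ, Set.univ_inter, Real.volume_Icc]
  norm_num

lemma measurable_gammaPDF (a r : ℝ) : Measurable (gammaPDF a r) :=
  (measurable_gammaPDFReal a r).ennreal_ofReal

lemma L1 : Measure.map (fun p : ℝ × ℝ => p.1 * p.2)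
    ((gammaMeasure 2 1).prod (volume.restrict (Icc (0:ℝ) 1))) = expMeasure 1 := by
  haveI hg : IsProbabilityMeasure (gammaMeasure 2 1) :=
    isProbabilityMeasure_gammaMeasure (by norm_num) one_pos
  haveI := unif_prob
  haveI : IsProbabilityMeasure (Measure.map (fun p : ℝ × ℝ => p.1 * p.2)
      ((gammaMeasure 2 1).prod (volume.restrict (Icc (0:ℝ) 1)))) :=
    Measure.isProbabilityMeasure_map (measurable_fst.mul measurable_snd).aemeasurable
  refine Measure.ext_of_Iic _ _ fun x => ?_
  have hs : MeasurableSet {p : ℝ × ℝ | p.1 * p.2 ≤ x} :=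
    (measurable_fst.mul measurable_snd) measurableSet_Iic
  rw [Measure.map_apply (f := fun p : ℝ × ℝ => p.1 * p.2) (measurable_fst.mul measurable_snd) measurableSet_Iic]
  have hpre : (fun p : ℝ × ℝ => p.1 * p.2) ⁻¹' (Iic x) = {p : ℝ × ℝ | p.1 * p.2 ≤ x} := rfl
  rw [hpre, Measure.prod_apply hs]
  -- inner measure formula
  have hinner : ∀ g : ℝ, 0 < g →
      (volume.restrict (Icc (0:ℝ) 1)) (Prod.mk g ⁻¹' {p : ℝ × ℝ | p.1 * p.2 ≤ x})
        = ENNReal.ofReal (min (x / g) 1) := by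
    intro g hgpos
    have hset : Prod.mk g ⁻¹' {p : ℝ × ℝ | p.1 * p.2 ≤ x} = Iic (x / g) := by
      ext u
      simp only [mem_preimage, mem_setOf_eq, mem_Iic, le_div_iff₀ hgpos]
      rw [mul_comm]
    rw [hset, Measure.restrict_apply measurableSet_Iic]
    rcases lt_or_ge (x / g) 0 with hc | hc
    · have : Iic (x / g) ∩ Icc (0:ℝ) 1 = ∅ := by
        ext u
        simp only [mem_inter_iff, mem_Iic, mem_Icc, mem_empty_iff_false, iff_false]
        rintro ⟨h1, h2, h3⟩; linarith
      rw [this, measure_empty]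
      symm
      rw [ENNReal.ofReal_eq_zero]
      simp only [min_le_iff]
      left; linarith
    · have : Iic (x / g) ∩ Icc (0:ℝ) 1 = Icc 0 (min (x / g) 1) := by
        ext u
        simp only [mem_inter_iff, mem_Iic, mem_Icc, le_min_iff]
        tauto
      rw [this, Real.volume_Icc, sub_zero]
  -- move to volume with density
  rw [show gammaMeasure 2 1 = volume.withDensity (gammaPDF 2 1) from rfl,
    lintegral_withDensity_eq_lintegral_mul volume (measurable_gammaPDF 2 1)
      (measurable_measure_prodMk_left hs)]
  have hsplit : ∫⁻ g, (gammaPDF 2 1 * fun g =>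
        (volume.restrict (Icc (0:ℝ) 1)) (Prod.mk g ⁻¹' {p : ℝ × ℝ | p.1 * p.2 ≤ x})) g
      = ∫⁻ g in Ioi (0:ℝ), ENNReal.ofReal (Real.exp (-g) * min g x) := by
    rw [← lintegral_add_compl _ measurableSet_Ioi (μ := volume), compl_Ioi]
    have h0 : ∫⁻ g in Iic (0:ℝ), (gammaPDF 2 1 * fun g =>
        (volume.restrict (Icc (0:ℝ) 1)) (Prod.mk g ⁻¹' {p : ℝ × ℝ | p.1 * p.2 ≤ x})) g = 0 := by
      rw [setLIntegral_congr_fun measurableSet_Iic (fun g (hgle : g ≤ 0) => ?_),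
        lintegral_zero]
      simp [gammaPDF_zero_of_nonpos one_lt_two hgle]
    rw [h0, add_zero]
    refine setLIntegral_congr_fun measurableSet_Ioi (fun g (hgpos : 0 < g) => ?_)
    simp only [Pi.mul_apply]
    rw [hinner g hgpos, gammaPDF21 hgpos.le, ← ENNReal.ofReal_mul (by positivity)]
    congr 1
    have hmin : g * min (x / g) 1 = min x g := by
      rw [mul_min_of_nonneg _ _ hgpos.le, mul_div_cancel₀ _ hgpos.ne', mul_one]
    calc g * Real.exp (-g) * min (x / g) 1 = Real.exp (-g) * (g * min (x / g) 1) := by ring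
      _ = Real.exp (-g) * min g x := by rw [hmin, min_comm]
  rw [hsplit, exp_cdf]
  rcases le_or_gt 0 x with hx | hx
  · -- compute the integral
    have hint : IntegrableOn (fun g => Real.exp (-g) * min g x) (Ioi (0:ℝ)) := by
      have hbound : IntegrableOn (fun g => x * Real.exp (-(1:ℝ) * g)) (Ioi (0:ℝ)) :=
        (exp_neg_integrableOn_Ioi 0 one_pos).const_mul x
      refine Integrable.mono hbound ?_ ?_
      · exact ((Real.continuous_exp.comp continuous_neg).mul
          (continuous_id.min continuous_const)).aestronglyMeasurable
      · refine (ae_restrict_iff' measurableSet_Ioi).2 (ae_of_all _ fun g (hg : 0 < g) => ?_)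
        have h1 : 0 ≤ min g x := le_min hg.le hx
        have h2 : min g x ≤ x := min_le_right _ _
        rw [Real.norm_eq_abs, Real.norm_eq_abs, abs_of_nonneg (by positivity),
          abs_of_nonneg (by positivity : (0:ℝ) ≤ x * Real.exp (-(1:ℝ) * g))]
        rw [neg_one_mul]
        nlinarith [Real.exp_pos (-g)]
    rw [← ofReal_integral_eq_lintegral_ofReal hint
      ((ae_restrict_iff' measurableSet_Ioi).2 (ae_of_all _ fun g (hg : 0 < g) =>
        mul_nonneg (Real.exp_pos _).le (le_min hg.le hx)))]
    congr 1
    rw [← Ioc_union_Ioi_eq_Ioi hx,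
      setIntegral_union (Ioc_disjoint_Ioi le_rfl) measurableSet_Ioi
        (hint.mono_set (by rw [← Ioc_union_Ioi_eq_Ioi hx]; exact subset_union_left))
        (hint.mono_set (by rw [← Ioc_union_Ioi_eq_Ioi hx]; exact subset_union_right))]
    have e1 : ∫ g in Ioc (0:ℝ) x, Real.exp (-g) * min g x = 1 - (1+x) * Real.exp (-x) := by
      rw [setIntegral_congr_fun measurableSet_Ioc
        (fun g hg => by rw [min_eq_left hg.2, mul_comm] : EqOn _ (fun g => g * Real.exp (-g)) _)]
      rw [← intervalIntegral.integral_of_le hx, intMulExp]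
      simp; ring
    have e2 : ∫ g in Ioi x, Real.exp (-g) * min g x = x * Real.exp (-x) := by
      rw [setIntegral_congr_fun measurableSet_Ioi
        (fun g hg => by rw [min_eq_right (le_of_lt hg), mul_comm] : EqOn _ (fun g => x * Real.exp (-g)) _)]
      rw [integral_const_mul, integral_exp_neg_Ioi]
    rw [e1, e2]; ring
  · -- x < 0 : both sides zero
    have h0 : ∫⁻ g in Ioi (0:ℝ), ENNReal.ofReal (Real.exp (-g) * min g x) = 0 := by
      rw [setLIntegral_congr_fun measurableSet_Ioi (fun g (hg : 0 < g) => ?_),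
        lintegral_zero]
      rw [ENNReal.ofReal_eq_zero]
      have : min g x = x := min_eq_right (by linarith)
      rw [this]
      nlinarith [Real.exp_pos (-g)]
    rw [h0]
    symm
    rw [ENNReal.ofReal_eq_zero]
    have : 1 < Real.exp (-x) := by
      rw [show (1:ℝ) = Real.exp 0 by simp]
      exact Real.exp_lt_exp.2 (by linarith)
    linarith
lemma L2 : Measure.map (fun p : ℝ × ℝ => p.1 + p.2)
    ((expMeasure 1).prod (expMeasure 1)) = gammaMeasure 2 1 := by
  haveI he : IsProbabilityMeasure (expMeasure 1) := isProbabilityMeasure_expMeasure one_pos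
  haveI : IsProbabilityMeasure (Measure.map (fun p : ℝ × ℝ => p.1 + p.2)
      ((expMeasure 1).prod (expMeasure 1))) :=
    Measure.isProbabilityMeasure_map (measurable_fst.add measurable_snd).aemeasurable
  refine Measure.ext_of_Iic _ _ fun x => ?_
  have hs : MeasurableSet {p : ℝ × ℝ | p.1 + p.2 ≤ x} :=
    (measurable_fst.add measurable_snd) measurableSet_Iic
  rw [Measure.map_apply (f := fun p : ℝ × ℝ => p.1 + p.2) (measurable_fst.add measurable_snd) measurableSet_Iic]
  have hpre : (fun p : ℝ × ℝ => p.1 + p.2) ⁻¹' (Iic x) = {p : ℝ × ℝ | p.1 + p.2 ≤ x} := rfl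
  rw [hpre, Measure.prod_apply hs]
  have hinner : ∀ s : ℝ,
      (expMeasure 1) (Prod.mk s ⁻¹' {p : ℝ × ℝ | p.1 + p.2 ≤ x})
        = ENNReal.ofReal (1 - Real.exp (s - x)) := by
    intro s
    have hset : Prod.mk s ⁻¹' {p : ℝ × ℝ | p.1 + p.2 ≤ x} = Iic (x - s) := by
      ext t
      simp only [mem_preimage, mem_setOf_eq, mem_Iic]
      constructor <;> intro h <;> linarith
    rw [hset, exp_cdf, neg_sub]
  simp_rw [hinner]
  rw [show expMeasure 1 = volume.withDensity (gammaPDF 1 1) from rfl,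
    lintegral_withDensity_eq_lintegral_mul volume (measurable_gammaPDF 1 1)
      (by fun_prop : Measurable fun s : ℝ => ENNReal.ofReal (1 - Real.exp (s - x)))]
  rw [← lintegral_add_compl _ measurableSet_Ici (μ := volume), compl_Ici]
  have h0 : ∫⁻ s in Iio (0:ℝ), (gammaPDF 1 1 * fun s => ENNReal.ofReal (1 - Real.exp (s - x))) s = 0 := by
    rw [setLIntegral_congr_fun measurableSet_Iio (fun s (hslt : s < 0) => ?_),
      lintegral_zero]
    simp [gammaPDF_of_neg hslt]
  rw [h0, add_zero]
  have hcong : ∫⁻ s in Ici (0:ℝ), (gammaPDF 1 1 * fun s => ENNReal.ofReal (1 - Real.exp (s - x))) s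
      = ∫⁻ s in Ici (0:ℝ), ENNReal.ofReal (Real.exp (-s) - Real.exp (-x)) := by
    refine setLIntegral_congr_fun measurableSet_Ici (fun s (hsge : 0 ≤ s) => ?_)
    simp only [Pi.mul_apply]
    rw [gammaPDF11 hsge, ← ENNReal.ofReal_mul (Real.exp_pos _).le]
    congr 1
    rw [mul_sub, mul_one, ← Real.exp_add]
    ring_nf
  rw [hcong]
  rcases le_or_gt 0 x with hx | hx
  · rw [← Icc_union_Ioi_eq_Ici hx,
      lintegral_union measurableSet_Ioi ((Iic_disjoint_Ioi le_rfl).mono_left Icc_subset_Iic_self)]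
    have hIoi : ∫⁻ s in Ioi x, ENNReal.ofReal (Real.exp (-s) - Real.exp (-x)) = 0 := by
      rw [setLIntegral_congr_fun measurableSet_Ioi (fun s (hsx : x < s) => ?_),
        lintegral_zero]
      rw [ENNReal.ofReal_eq_zero, sub_nonpos]
      exact Real.exp_le_exp.2 (by linarith)
    rw [hIoi, add_zero]
    have hint : IntegrableOn (fun s => Real.exp (-s) - Real.exp (-x)) (Icc (0:ℝ) x) :=
      Continuous.integrableOn_Icc (by continuity)
    rw [← ofReal_integral_eq_lintegral_ofReal hint
      ((ae_restrict_iff' measurableSet_Icc).2 (ae_of_all _ fun s hsmem => by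
        simp only [Pi.zero_apply, sub_nonneg]
        exact Real.exp_le_exp.2 (by linarith [hsmem.2])))]
    rw [gamma2_cdf hx]
    congr 1
    have : ∫ s in Icc (0:ℝ) x, (Real.exp (-s) - Real.exp (-x))
        = ∫ s in (0:ℝ)..x, (Real.exp (-s) - Real.exp (-x)) := by
      rw [intervalIntegral.integral_of_le hx, integral_Icc_eq_integral_Ioc]
    rw [this, intervalIntegral.integral_sub (by apply Continuous.intervalIntegrable; continuity)
      (intervalIntegrable_const), intExp, intervalIntegral.integral_const]
    simp; ring
  · have h0' : ∫⁻ s in Ici (0:ℝ), ENNReal.ofReal (Real.exp (-s) - Real.exp (-x)) = 0 := by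
      rw [setLIntegral_congr_fun measurableSet_Ici (fun s (hsge : 0 ≤ s) => ?_),
        lintegral_zero]
      rw [ENNReal.ofReal_eq_zero, sub_nonpos]
      exact Real.exp_le_exp.2 (by linarith)
    rw [h0', gamma2_cdf_neg hx]

end Aux
open Real Set

/-- If `U`, `G`, `E` are independent with `U ~ Unif[0,1]`, `G ~ Γ(2,1)` and `E ~ Exp(1)`,
then `U·G ~ Exp(1)` and `U·G + E ~ Γ(2,1)`. -/
theorem unif_mul_gamma_add_exp {Ω : Type*} [MeasurableSpace Ω] (P : Measure Ω)
    [IsProbabilityMeasure P] (U G E : Ω → ℝ)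
    (hUmeas : Measurable U) (hGmeas : Measurable G) (hEmeas : Measurable E)
    (hindep : iIndepFun ![U, G, E] P)
    (hU : Measure.map U P = volume.restrict (Set.Icc (0 : ℝ) 1))
    (hG : Measure.map G P = gammaMeasure 2 1)
    (hE : Measure.map E P = expMeasure 1) :
    Measure.map (fun ω => U ω * G ω) P = expMeasure 1 ∧
    Measure.map (fun ω => U ω * G ω + E ω) P = gammaMeasure 2 1 := by
  have hf : ∀ i, Measurable (![U, G, E] i) := by
    intro i; fin_cases i <;> assumption
  have hGU : IndepFun G U P := by
    have := hindep.indepFun (i := 1) (j := 0) (by decide)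
    simpa using this
  have hmapGU : Measure.map (fun ω => (G ω, U ω)) P
      = (gammaMeasure 2 1).prod (volume.restrict (Icc (0:ℝ) 1)) := by
    rw [← hG, ← hU]
    exact (indepFun_iff_map_prod_eq_prod_map_map hGmeas.aemeasurable hUmeas.aemeasurable).mp hGU
  have part1 : Measure.map (fun ω => U ω * G ω) P = expMeasure 1 := by
    have hcomm : (fun ω => U ω * G ω)
        = (fun p : ℝ × ℝ => p.1 * p.2) ∘ (fun ω => (G ω, U ω)) := by
      funext ω; simp [mul_comm]
    rw [hcomm, ← Measure.map_map (g := fun p : ℝ × ℝ => p.1 * p.2) (measurable_fst.mul measurable_snd) (hGmeas.prodMk hUmeas),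
      hmapGU, L1]
  refine ⟨part1, ?_⟩
  have hi : IndepFun (fun ω => U ω * G ω) E P := by
    have := hindep.indepFun_mul_left hf 0 1 2 (by decide) (by decide)
    simp at this; exact this
  have hmapME : Measure.map (fun ω => (U ω * G ω, E ω)) P
      = (expMeasure 1).prod (expMeasure 1) := by
    rw [(indepFun_iff_map_prod_eq_prod_map_map (f := fun ω => U ω * G ω) (hUmeas.mul hGmeas).aemeasurable
      hEmeas.aemeasurable).mp hi, part1, hE]
  rw [show (fun ω => U ω * G ω + E ω)
      = (fun p : ℝ × ℝ => p.1 + p.2) ∘ (fun ω => (U ω * G ω, E ω)) from rfl,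
    ← Measure.map_map (g := fun p : ℝ × ℝ => p.1 + p.2) (f := fun ω => (U ω * G ω, E ω)) (measurable_fst.add measurable_snd) ((hUmeas.mul hGmeas).prodMk hEmeas),
    hmapME, L2]
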